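/- Let (Ω, Σ, μ) be a measure space, ρ : Ω → (0,∞) measurable, and f, g, h : Ω → ℝ measurable with h(x) ≠ 0 for μ-a.e. x, such that ρ·f², ρ·g², ρ·h², ρ·f·g, ρ·f·h, ρ·g·h are μ-integrable. If the pair (f/h, g/h) is synchronous, i.e. (f(x)/h(x) − f(y)/h(y))·(g(x)/h(x) − g(y)/h(y)) ≥ 0 for μ⊗μ-a.e. (x,y) ∈ Ω × Ω, then (∫ ρ f g dμ)·(∫ ρ h² dμ) − (∫ ρ f h dμ)·(∫ ρ g h dμ) ≥ 0. -/
import Mathlib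


open MeasureTheory

theorem gram_nonneg_of_synchronous {Ω : Type*} [MeasurableSpace Ω]
    (μ : Measure Ω) [SigmaFinite μ] (ρ f g h : Ω → ℝ)
    (hρm : Measurable ρ) (hρpos : ∀ x, 0 < ρ x)
    (hfm : Measurable f) (hgm : Measurable g) (hhm : Measurable h)
    (hne : ∀ᵐ x ∂μ, h x ≠ 0)
    (hf2 : Integrable (fun x => ρ x * f x ^ 2) μ)
    (hg2 : Integrable (fun x => ρ x * g x ^ 2) μ)
    (hh2 : Integrable (fun x => ρ x * h x ^ 2) μ)
    (hfg : Integrable (fun x => ρ x * f x * g x) μ)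
    (hfh : Integrable (fun x => ρ x * f x * h x) μ)
    (hgh : Integrable (fun x => ρ x * g x * h x) μ)
    (hsync : ∀ᵐ p ∂(μ.prod μ),
      0 ≤ (f p.1 / h p.1 - f p.2 / h p.2) * (g p.1 / h p.1 - g p.2 / h p.2)) :
    0 ≤ (∫ x, ρ x * f x * g x ∂μ) * (∫ x, ρ x * h x ^ 2 ∂μ) -
        (∫ x, ρ x * f x * h x ∂μ) * (∫ x, ρ x * g x * h x ∂μ) := by
  set F : Ω × Ω → ℝ := fun p =>
    (ρ p.1 * f p.1 * g p.1) * (ρ p.2 * h p.2 ^ 2) +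
    (ρ p.1 * h p.1 ^ 2) * (ρ p.2 * f p.2 * g p.2) -
    (ρ p.1 * f p.1 * h p.1) * (ρ p.2 * g p.2 * h p.2) -
    (ρ p.1 * g p.1 * h p.1) * (ρ p.2 * f p.2 * h p.2) with hF
  have i1 := hfg.mul_prod hh2
  have i2 := hh2.mul_prod hfg
  have i3 := hfh.mul_prod hgh
  have i4 := hgh.mul_prod hfh
  have hFint : Integrable F (μ.prod μ) := ((i1.add i2).sub i3).sub i4
  have hne1 : ∀ᵐ p ∂(μ.prod μ), h p.1 ≠ 0 :=
    (Measure.quasiMeasurePreserving_fst (μ := μ) (ν := μ)).ae hne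
  have hne2 : ∀ᵐ p ∂(μ.prod μ), h p.2 ≠ 0 :=
    (Measure.quasiMeasurePreserving_snd (μ := μ) (ν := μ)).ae hne
  have hFnn : ∀ᵐ p ∂(μ.prod μ), 0 ≤ F p := by
    filter_upwards [hne1, hne2, hsync] with p h1 h2 hs
    have key : F p = (ρ p.1 * ρ p.2 * (h p.1 * h p.2) ^ 2) *
        ((f p.1 / h p.1 - f p.2 / h p.2) * (g p.1 / h p.1 - g p.2 / h p.2)) := by
      simp only [hF]
      field_simp
      ring
    rw [key]
    have := (hρpos p.1).le
    have := (hρpos p.2).le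
    positivity
  have hI : 0 ≤ ∫ p, F p ∂(μ.prod μ) := integral_nonneg_of_ae hFnn
  have hval : ∫ p, F p ∂(μ.prod μ) =
      (∫ x, ρ x * f x * g x ∂μ) * (∫ x, ρ x * h x ^ 2 ∂μ) +
      (∫ x, ρ x * h x ^ 2 ∂μ) * (∫ x, ρ x * f x * g x ∂μ) -
      (∫ x, ρ x * f x * h x ∂μ) * (∫ x, ρ x * g x * h x ∂μ) -
      (∫ x, ρ x * g x * h x ∂μ) * (∫ x, ρ x * f x * h x ∂μ) := by
    have h4 := integral_sub ((i1.add i2).sub i3) i4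
    have h3 := integral_sub (i1.add i2) i3
    have h2 := integral_add i1 i2
    simp only [Pi.sub_apply, Pi.add_apply] at h4 h3 h2
    have e1 := integral_prod_mul (μ := μ) (ν := μ) (f := fun x => ρ x * f x * g x)
      (g := fun x => ρ x * h x ^ 2)
    have e2 := integral_prod_mul (μ := μ) (ν := μ) (f := fun x => ρ x * h x ^ 2)
      (g := fun x => ρ x * f x * g x)
    have e3 := integral_prod_mul (μ := μ) (ν := μ) (f := fun x => ρ x * f x * h x)
      (g := fun x => ρ x * g x * h x)
    have e4 := integral_prod_mul (μ := μ) (ν := μ) (f := fun x => ρ x * g x * h x)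
      (g := fun x => ρ x * f x * h x)
    beta_reduce at e1 e2 e3 e4
    rw [hF]
    beta_reduce
    rw [h4, h3, h2, e1, e2, e3, e4]
  rw [hval] at hI
  linarith
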